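/- For every natural number q ≥ 1 there exists a real constant c with 0 < c < 1 such that for every natural number n ≥ 1, the number of distinct Boolean functions f : (Fin n → Fin 2) → Fin 2 that are computed stringently by some quantum circuit with n + 1 wires and at most c · 2^n / n gates of arity at most q is at most 2^{2^{n−1}}. -/

import Mathlib

set_option linter.unusedSectionVars false
set_option linter.unusedVariables false
set_option maxHeartbeats 2000000

/-- Computational basis bit strings of an `m`-qubit register. -/
abbrev BitStr (m : ℕ) := Fin m → Fin 2

/-- The extension of a `k`-qubit gate matrix `U` to an `m`-qubit register along an
(injective) wire assignment `S : Fin k → Fin m`: the `(b, b')` entry equals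
`U (b ∘ S) (b' ∘ S)` if `b` and `b'` agree off the range of `S`, and `0` otherwise. -/
def ExtMat {k m : ℕ} (S : Fin k → Fin m) (U : Matrix (BitStr k) (BitStr k) ℂ) :
    Matrix (BitStr m) (BitStr m) ℂ :=
  fun b b' =>
    if (∀ i, (∀ j, S j ≠ i) → b i = b' i) then U (fun j => b (S j)) (fun j => b' (S j)) else 0

/-- The matrix `U(C) = Ext_{S_r}(U_r) ⋯ Ext_{S_1}(U_1)` implemented by a circuit whose `i`-th
gate acts via `U i` on the wires `S i`. -/
noncomputable def circMat {m r : ℕ} {k : Fin r → ℕ} (S : ∀ i, Fin (k i) → Fin m)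
    (U : ∀ i, Matrix (BitStr (k i)) (BitStr (k i)) ℂ) : Matrix (BitStr m) (BitStr m) ℂ :=
  (List.ofFn fun i => ExtMat (S i) (U i)).reverse.prod

/-- The basis bit string of length `n + 1 + t` consisting of `x` on the first `n` wires,
`y` on wire `n`, and `0` on the remaining `t` ancilla wires. -/
def padBits {n : ℕ} (t : ℕ) (x : Fin n → Fin 2) (y : Fin 2) : BitStr (n + 1 + t) :=
  fun i => if h : (i : ℕ) < n then x ⟨i, h⟩ else if (i : ℕ) = n then y else 0

/-- A matrix `M` on `n + 1 + t` qubits computes the Boolean function `f` (probabilistically):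
the squared modulus of the entry in row `(x', y, 0^t)` and column `(x, 0, 0^t)` is `> 1/2`
when `x' = x` and `y = f x`, and `< 1/2` otherwise. -/
def MatComputes {n t : ℕ} (M : Matrix (BitStr (n + 1 + t)) (BitStr (n + 1 + t)) ℂ)
    (f : (Fin n → Fin 2) → Fin 2) : Prop :=
  ∀ (x x' : Fin n → Fin 2) (y : Fin 2),
    (x' = x ∧ y = f x →
      1 / 2 < Complex.normSq (M (padBits t x' y) (padBits t x 0))) ∧
    (¬(x' = x ∧ y = f x) →
      Complex.normSq (M (padBits t x' y) (padBits t x 0)) < 1 / 2)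

/-- A matrix `M` on `n + 1` qubits computes `f` stringently: it maps each basis vector
`|x, y⟩` to `|x, y ⊕ f x⟩`. -/
def MatComputesStringent {n : ℕ} (M : Matrix (BitStr (n + 1)) (BitStr (n + 1)) ℂ)
    (f : (Fin n → Fin 2) → Fin 2) : Prop :=
  ∀ (x : Fin n → Fin 2) (y : Fin 2) (b : BitStr (n + 1)),
    M b (padBits 0 x y) = if b = padBits 0 x (y + f x) then 1 else 0

/-- `f` is computed stringently by some quantum circuit on `n + 1` wires with at most
`c * 2^n / n` gates, each of arity at most `q`. -/
def StringentlyComputedBySmallCircuit (q n : ℕ) (c : ℝ)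
    (f : (Fin n → Fin 2) → Fin 2) : Prop :=
  ∃ (r : ℕ) (k : Fin r → ℕ) (S : ∀ i, Fin (k i) → Fin (n + 1))
    (U : ∀ i, Matrix (BitStr (k i)) (BitStr (k i)) ℂ),
    (r : ℝ) ≤ c * 2 ^ n / n ∧
    (∀ i, 1 ≤ k i ∧ k i ≤ q) ∧
    (∀ i, Function.Injective (S i)) ∧
    (∀ i, U i ∈ Matrix.unitaryGroup (BitStr (k i)) ℂ) ∧
    MatComputesStringent (circMat S U) f

/-! ### Auxiliary: ℓ² norms of complex vectors -/

open Matrix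
open scoped Kronecker

section Vec

variable {ι : Type*} [Fintype ι] [DecidableEq ι]

noncomputable def sqv (v : ι → ℂ) : ℝ := ∑ b, Complex.normSq (v b)

noncomputable def en (v : ι → ℂ) : ℝ := Real.sqrt (sqv v)

lemma sqv_nonneg (v : ι → ℂ) : 0 ≤ sqv v :=
  Finset.sum_nonneg fun _ _ => Complex.normSq_nonneg _

lemma en_nonneg (v : ι → ℂ) : 0 ≤ en v := Real.sqrt_nonneg _

lemma en_eq_norm (v : ι → ℂ) :
    en v = ‖((WithLp.equiv 2 (ι → ℂ)).symm v : EuclideanSpace ℂ ι)‖ := by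
  rw [EuclideanSpace.norm_eq]
  unfold en sqv
  congr 1
  refine Finset.sum_congr rfl fun b _ => ?_
  rw [Complex.normSq_eq_norm_sq]; rfl

lemma en_triangle (v w : ι → ℂ) : en (v + w) ≤ en v + en w := by
  rw [en_eq_norm, en_eq_norm, en_eq_norm]
  have : ((WithLp.equiv 2 (ι → ℂ)).symm (v + w) : EuclideanSpace ℂ ι)
      = (WithLp.equiv 2 (ι → ℂ)).symm v + (WithLp.equiv 2 (ι → ℂ)).symm w := rfl
  rw [this]
  exact norm_add_le _ _

lemma en_single (b0 : ι) : en (Pi.single b0 (1:ℂ)) = 1 := by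
  unfold en sqv
  rw [Finset.sum_eq_single b0]
  · simp
  · intro b _ hb; simp [Pi.single_eq_of_ne hb]
  · intro h; simp at h

lemma comp_le_en (v : ι → ℂ) (b : ι) : ‖v b‖ ≤ en v := by
  unfold en
  rw [show ‖v b‖ = Real.sqrt (Complex.normSq (v b)) by
    rw [Complex.norm_def]]
  apply Real.sqrt_le_sqrt
  exact Finset.single_le_sum (fun b _ => Complex.normSq_nonneg (v b)) (Finset.mem_univ b)

lemma star_dot (v : ι → ℂ) : dotProduct (star v) v = (sqv v : ℂ) := by
  unfold dotProduct sqv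
  push_cast
  refine Finset.sum_congr rfl fun b _ => ?_
  simp [Complex.normSq_eq_conj_mul_self]

lemma sqv_mulVec_unitary {X : Matrix ι ι ℂ} (hX : X ∈ Matrix.unitaryGroup ι ℂ)
    (v : ι → ℂ) : sqv (X.mulVec v) = sqv v := by
  have h1 : dotProduct (star (X.mulVec v)) (X.mulVec v)
      = dotProduct (star v) v := by
    rw [Matrix.star_mulVec, Matrix.dotProduct_mulVec, Matrix.vecMul_vecMul]
    have : Xᴴ * X = 1 := by
      have := Unitary.star_mul_self_of_mem hX
      rwa [Matrix.star_eq_conjTranspose] at this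
    rw [this, Matrix.vecMul_one]
  have := (star_dot (X.mulVec v)).symm.trans (h1.trans (star_dot v))
  exact_mod_cast this

lemma en_mulVec_unitary {X : Matrix ι ι ℂ} (hX : X ∈ Matrix.unitaryGroup ι ℂ)
    (v : ι → ℂ) : en (X.mulVec v) = en v := by
  unfold en; rw [sqv_mulVec_unitary hX]

lemma unitary_entry_le {X : Matrix ι ι ℂ} (hX : X ∈ Matrix.unitaryGroup ι ℂ)
    (a b : ι) : ‖X a b‖ ≤ 1 := by
  have h1 : (Xᴴ * X) b b = 1 := by
    have : Xᴴ * X = 1 := by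
      have := Unitary.star_mul_self_of_mem hX
      rwa [Matrix.star_eq_conjTranspose] at this
    rw [this, Matrix.one_apply_eq]
  have h2 : (∑ c, Complex.normSq (X c b)) = 1 := by
    have : (Xᴴ * X) b b = ∑ c, (Complex.normSq (X c b) : ℂ) := by
      rw [Matrix.mul_apply]
      refine Finset.sum_congr rfl fun c _ => ?_
      rw [Matrix.conjTranspose_apply]
      simp [Complex.normSq_eq_conj_mul_self]
    rw [this] at h1
    exact_mod_cast h1
  have h3 : Complex.normSq (X a b) ≤ 1 := by
    rw [← h2]
    exact Finset.single_le_sum (fun c _ => Complex.normSq_nonneg (X c b)) (Finset.mem_univ a)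
  rw [Complex.norm_def]
  calc Real.sqrt (Complex.normSq (X a b)) ≤ Real.sqrt 1 := Real.sqrt_le_sqrt h3
  _ = 1 := Real.sqrt_one

lemma sqv_small_mulVec {A : Matrix ι ι ℂ} {ε : ℝ} (hε : 0 ≤ ε)
    (hA : ∀ a b, ‖A a b‖ ≤ ε) (v : ι → ℂ) :
    sqv (A.mulVec v) ≤ ((Fintype.card ι) * ε)^2 * sqv v := by
  classical
  have key : ∀ b : ι, Complex.normSq (A.mulVec v b) ≤ (Fintype.card ι) * ε^2 * sqv v := by
    intro b
    have h1 : ‖A.mulVec v b‖ ≤ ε * ∑ c, ‖v c‖ := by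
      unfold Matrix.mulVec dotProduct
      calc ‖∑ c, A b c * v c‖ ≤ ∑ c, ‖A b c * v c‖ := norm_sum_le _ _
      _ ≤ ∑ c, ε * ‖v c‖ := by
          refine Finset.sum_le_sum fun c _ => ?_
          rw [norm_mul]
          exact mul_le_mul_of_nonneg_right (hA b c) (norm_nonneg _)
      _ = ε * ∑ c, ‖v c‖ := by rw [Finset.mul_sum]
    have h2 : (∑ c, ‖v c‖)^2 ≤ (Fintype.card ι) * sqv v := by
      have := sq_sum_le_card_mul_sum_sq (s := (Finset.univ : Finset ι))
        (f := fun c => ‖v c‖)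
      simpa [sqv, Finset.card_univ, Complex.normSq_eq_norm_sq, sq] using this
    have h3 : Complex.normSq (A.mulVec v b) = ‖A.mulVec v b‖^2 := by
      rw [Complex.normSq_eq_norm_sq]
    rw [h3]
    calc ‖A.mulVec v b‖^2 ≤ (ε * ∑ c, ‖v c‖)^2 := by
          apply sq_le_sq' _ h1
          have : 0 ≤ ε * ∑ c, ‖v c‖ :=
            mul_nonneg hε (Finset.sum_nonneg fun c _ => norm_nonneg _)
          linarith [norm_nonneg (A.mulVec v b)]
    _ = ε^2 * (∑ c, ‖v c‖)^2 := by ring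
    _ ≤ ε^2 * ((Fintype.card ι) * sqv v) :=
        mul_le_mul_of_nonneg_left h2 (sq_nonneg _)
    _ = (Fintype.card ι) * ε^2 * sqv v := by ring
  calc sqv (A.mulVec v) = ∑ b, Complex.normSq (A.mulVec v b) := rfl
  _ ≤ ∑ _b : ι, (Fintype.card ι) * ε^2 * sqv v :=
      Finset.sum_le_sum fun b _ => key b
  _ = (Fintype.card ι) * ((Fintype.card ι) * ε^2 * sqv v) := by
      rw [Finset.sum_const, Finset.card_univ, nsmul_eq_mul]
  _ = ((Fintype.card ι) * ε)^2 * sqv v := by ring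

lemma en_small_mulVec {A : Matrix ι ι ℂ} {ε : ℝ} (hε : 0 ≤ ε)
    (hA : ∀ a b, ‖A a b‖ ≤ ε) (v : ι → ℂ) :
    en (A.mulVec v) ≤ (Fintype.card ι) * ε * en v := by
  unfold en
  have h := sqv_small_mulVec hε hA v
  have hc : (0:ℝ) ≤ (Fintype.card ι) * ε := by positivity
  calc Real.sqrt (sqv (A.mulVec v)) ≤ Real.sqrt (((Fintype.card ι) * ε)^2 * sqv v) :=
        Real.sqrt_le_sqrt h
  _ = (Fintype.card ι) * ε * Real.sqrt (sqv v) := by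
      rw [Real.sqrt_mul (sq_nonneg _), Real.sqrt_sq hc]

end Vec

/-! ### The extension map is a star-algebra homomorphism -/

namespace ExtFacts

variable {k m : ℕ} (S : Fin k → Fin m)

noncomputable instance (s : Set (Fin m)) : DecidablePred (· ∈ s) := Classical.decPred _

noncomputable def extEquiv (hS : Function.Injective S) :
    BitStr m ≃ (BitStr k × (((Set.range S)ᶜ : Set (Fin m)) → Fin 2)) :=
  ((Equiv.Set.sumCompl (Set.range S)).symm.arrowCongr (Equiv.refl (Fin 2))).trans
    ((Equiv.sumArrowEquivProdArrow _ _ _).trans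
      (Equiv.prodCongr ((Equiv.ofInjective S hS).symm.arrowCongr (Equiv.refl _)) (Equiv.refl _)))

lemma extEquiv_fst (hS : Function.Injective S) (b : BitStr m) :
    (extEquiv S hS b).1 = fun j => b (S j) := by
  funext j
  simp [extEquiv, Equiv.arrowCongr, Equiv.sumArrowEquivProdArrow]

lemma extEquiv_snd (hS : Function.Injective S) (b : BitStr m)
    (i : (((Set.range S)ᶜ : Set (Fin m)))) :
    (extEquiv S hS b).2 i = b i.1 := by
  simp [extEquiv, Equiv.arrowCongr, Equiv.sumArrowEquivProdArrow]

lemma ext_eq_reindex (hS : Function.Injective S) (A : Matrix (BitStr k) (BitStr k) ℂ) :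
    ExtMat S A = Matrix.reindexAlgEquiv ℂ ℂ (extEquiv S hS).symm
      (A ⊗ₖ (1 : Matrix (((Set.range S)ᶜ : Set (Fin m)) → Fin 2) _ ℂ)) := by
  ext b b'
  rw [Matrix.reindexAlgEquiv_apply, Matrix.reindex_apply]
  rw [Matrix.submatrix_apply, Equiv.symm_symm, Matrix.kroneckerMap_apply]
  rw [extEquiv_fst, extEquiv_fst]
  have hcond : (∀ i, (∀ j, S j ≠ i) → b i = b' i) ↔
      ((extEquiv S hS b).2 = (extEquiv S hS b').2) := by
    constructor
    · intro h
      funext i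
      rw [extEquiv_snd, extEquiv_snd]
      exact h i.1 (by
        have := i.2
        simp only [Set.mem_compl_iff, Set.mem_range] at this
        intro j hj
        exact this ⟨j, hj⟩)
    · intro h i hi
      have hic : i ∈ ((Set.range S)ᶜ : Set (Fin m)) := by
        simp only [Set.mem_compl_iff, Set.mem_range]
        rintro ⟨j, hj⟩
        exact hi j hj
      have := congrFun h ⟨i, hic⟩
      rwa [extEquiv_snd, extEquiv_snd] at this
  unfold ExtMat
  by_cases h : (∀ i, (∀ j, S j ≠ i) → b i = b' i)
  · rw [if_pos h, Matrix.one_apply, if_pos (hcond.mp h), mul_one]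
  · rw [if_neg h, Matrix.one_apply, if_neg (fun hc => h (hcond.mpr hc)), mul_zero]

lemma ext_one (hS : Function.Injective S) :
    ExtMat S (1 : Matrix (BitStr k) (BitStr k) ℂ) = 1 := by
  rw [ext_eq_reindex S hS, Matrix.one_kronecker_one, _root_.map_one]

lemma ext_mul (hS : Function.Injective S) (A B : Matrix (BitStr k) (BitStr k) ℂ) :
    ExtMat S (A * B) = ExtMat S A * ExtMat S B := by
  rw [ext_eq_reindex S hS, ext_eq_reindex S hS, ext_eq_reindex S hS, ← _root_.map_mul,
    ← Matrix.mul_kronecker_mul, one_mul]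

lemma ext_star (hS : Function.Injective S) (A : Matrix (BitStr k) (BitStr k) ℂ) :
    star (ExtMat S A) = ExtMat S (star A) := by
  rw [ext_eq_reindex S hS, ext_eq_reindex S hS]
  rw [Matrix.star_eq_conjTranspose, Matrix.star_eq_conjTranspose]
  rw [Matrix.reindexAlgEquiv_apply, Matrix.reindexAlgEquiv_apply,
    Matrix.conjTranspose_reindex]
  congr 1
  ext p q
  simp [Matrix.conjTranspose_apply, Matrix.kroneckerMap_apply, Matrix.one_apply, eq_comm]
  by_cases h : p.2 = q.2 <;> simp [h, eq_comm]

lemma ext_unitary (hS : Function.Injective S) {A : Matrix (BitStr k) (BitStr k) ℂ}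
    (hA : A ∈ Matrix.unitaryGroup (BitStr k) ℂ) :
    ExtMat S A ∈ Matrix.unitaryGroup (BitStr m) ℂ := by
  constructor
  · rw [ext_star S hS, ← ext_mul S hS, Unitary.star_mul_self_of_mem hA, ext_one S hS]
  · rw [ext_star S hS, ← ext_mul S hS, Unitary.mul_star_self_of_mem hA, ext_one S hS]

lemma ext_entry_close {A A' : Matrix (BitStr k) (BitStr k) ℂ} {ε : ℝ}
    (h : ∀ a b, ‖A a b - A' a b‖ ≤ ε) (hε : 0 ≤ ε) (b b' : BitStr m) :
    ‖ExtMat S A b b' - ExtMat S A' b b'‖ ≤ ε := by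
  unfold ExtMat
  by_cases hc : (∀ i, (∀ j, S j ≠ i) → b i = b' i)
  · rw [if_pos hc, if_pos hc]; exact h _ _
  · rw [if_neg hc, if_neg hc]; simpa using hε

end ExtFacts

/-! ### Telescoping perturbation bound -/

section Tel

variable {ι : Type*} [Fintype ι] [DecidableEq ι]

lemma prod_unitary {r : ℕ} (E : Fin r → Matrix ι ι ℂ)
    (h : ∀ i, E i ∈ Matrix.unitaryGroup ι ℂ) :
    (List.ofFn E).reverse.prod ∈ Matrix.unitaryGroup ι ℂ := by
  apply Submonoid.list_prod_mem
  intro x hx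
  rw [List.mem_reverse, List.mem_ofFn] at hx
  obtain ⟨i, rfl⟩ := hx
  exact h i

lemma tel {ε : ℝ} (hε : 0 ≤ ε) : ∀ {r : ℕ} (E E' : Fin r → Matrix ι ι ℂ),
    (∀ i, E i ∈ Matrix.unitaryGroup ι ℂ) → (∀ i, E' i ∈ Matrix.unitaryGroup ι ℂ) →
    (∀ i a b, ‖E i a b - E' i a b‖ ≤ ε) → ∀ v : ι → ℂ,
    en (((List.ofFn E).reverse.prod - (List.ofFn E').reverse.prod).mulVec v)
      ≤ r * ((Fintype.card ι) * ε) * en v := by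
  intro r
  induction r with
  | zero =>
    intro E E' _ _ _ v
    simp [List.ofFn_zero, Matrix.sub_mulVec]
    have : en (0 : ι → ℂ) = 0 := by
      unfold en sqv; simp
    exact le_of_eq this
  | succ r IH =>
    intro E E' hU hU' hcl v
    have hrw : ∀ (F : Fin (r+1) → Matrix ι ι ℂ),
        (List.ofFn F).reverse.prod
          = F (Fin.last r) * (List.ofFn (F ∘ Fin.castSucc)).reverse.prod := by
      intro F
      rw [List.ofFn_succ', List.concat_eq_append, List.reverse_append]
      simp
      rfl
    rw [hrw E, hrw E']
    set A := E (Fin.last r)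
    set A' := E' (Fin.last r)
    set T := (List.ofFn (E ∘ Fin.castSucc)).reverse.prod with hT
    set T' := (List.ofFn (E' ∘ Fin.castSucc)).reverse.prod with hT'
    have hsplit : (A*T - A'*T').mulVec v
        = (A - A').mulVec (T.mulVec v) + A'.mulVec ((T - T').mulVec v) := by
      simp only [Matrix.sub_mulVec, Matrix.mulVec_sub, Matrix.mulVec_mulVec,
        Matrix.sub_mul, Matrix.mul_sub]
      abel
    rw [hsplit]
    have hTu : T ∈ Matrix.unitaryGroup ι ℂ := prod_unitary _ (fun i => hU _)
    have h1 : en ((A - A').mulVec (T.mulVec v)) ≤ (Fintype.card ι) * ε * en v := by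
      calc en ((A - A').mulVec (T.mulVec v))
          ≤ (Fintype.card ι) * ε * en (T.mulVec v) :=
            en_small_mulVec hε (fun a b => by
              simpa [Matrix.sub_apply] using hcl (Fin.last r) a b) _
      _ = (Fintype.card ι) * ε * en v := by rw [en_mulVec_unitary hTu]
    have h2 : en (A'.mulVec ((T - T').mulVec v))
        ≤ r * ((Fintype.card ι) * ε) * en v := by
      rw [en_mulVec_unitary (hU' (Fin.last r))]
      exact IH (E ∘ Fin.castSucc) (E' ∘ Fin.castSucc) (fun i => hU _) (fun i => hU' _)
        (fun i a b => hcl _ a b) v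
    calc en ((A - A').mulVec (T.mulVec v) + A'.mulVec ((T - T').mulVec v))
        ≤ en ((A - A').mulVec (T.mulVec v)) + en (A'.mulVec ((T - T').mulVec v)) :=
          en_triangle _ _
    _ ≤ (Fintype.card ι) * ε * en v + r * ((Fintype.card ι) * ε) * en v := by
        exact add_le_add h1 h2
    _ = ((r:ℝ)+1) * ((Fintype.card ι) * ε) * en v := by ring
    _ = ((r+1 : ℕ) : ℝ) * ((Fintype.card ι) * ε) * en v := by push_cast; ring

end Tel

/-! ### Separation: close circuits compute the same function -/

section Sep

lemma mulVec_single_entry {ι : Type*} [Fintype ι] [DecidableEq ι]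
    {M : Matrix ι ι ℂ} (b c : ι) :
    M.mulVec (Pi.single c 1) b = M b c := by
  unfold Matrix.mulVec dotProduct
  rw [Finset.sum_eq_single c]
  · simp
  · intro d _ hd; simp [Pi.single_eq_of_ne hd]
  · intro h; simp at h

lemma padBits_last {n : ℕ} (x : Fin n → Fin 2) (y : Fin 2) :
    padBits 0 x y ⟨n, by omega⟩ = y := by
  simp [padBits]

lemma separation {n : ℕ} (R D : ℕ) (hD : D = 2^(n+4)*(R+1))
    {r : ℕ} (hr : r ≤ R) {k : Fin r → ℕ} (S : ∀ i, Fin (k i) → Fin (n+1))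
    (hSinj : ∀ i, Function.Injective (S i))
    {U U' : ∀ i, Matrix (BitStr (k i)) (BitStr (k i)) ℂ}
    (hU : ∀ i, U i ∈ Matrix.unitaryGroup (BitStr (k i)) ℂ)
    (hU' : ∀ i, U' i ∈ Matrix.unitaryGroup (BitStr (k i)) ℂ)
    (hclose : ∀ i a b, ‖U i a b - U' i a b‖ ≤ 4/D)
    {f f' : (Fin n → Fin 2) → Fin 2}
    (hf : MatComputesStringent (circMat S U) f)
    (hf' : MatComputesStringent (circMat S U') f') :
    f = f' := by
  by_contra hne
  obtain ⟨x, hx⟩ := Function.ne_iff.mp hne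
  set M := circMat S U with hM
  set M' := circMat S U' with hM'
  have hDpos : (0:ℝ) < D := by
    have : 0 < D := by rw [hD]; positivity
    exact_mod_cast this
  have hεpos : (0:ℝ) ≤ 4/D := by positivity
  have h1 : M (padBits 0 x (f x)) (padBits 0 x 0) = 1 := by
    have := hf x 0 (padBits 0 x (f x))
    rwa [zero_add, if_pos rfl] at this
  have h2 : M' (padBits 0 x (f x)) (padBits 0 x 0) = 0 := by
    have := hf' x 0 (padBits 0 x (f x))
    rw [zero_add, if_neg] at this
    · exact this
    · intro hcontra
      apply hx
      have := congrFun hcontra ⟨n, by omega⟩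
      rwa [padBits_last, padBits_last] at this
  have hlow : (1:ℝ) ≤ en ((M - M').mulVec (Pi.single (padBits 0 x 0) 1)) := by
    have hentry : (M - M').mulVec (Pi.single (padBits 0 x 0) 1) (padBits 0 x (f x)) = 1 := by
      rw [mulVec_single_entry, Matrix.sub_apply, h1, h2, sub_zero]
    calc (1:ℝ) = ‖(M - M').mulVec (Pi.single (padBits 0 x 0) 1) (padBits 0 x (f x))‖ := by
          rw [hentry]; simp
    _ ≤ _ := comp_le_en _ _
  have hup : en ((M - M').mulVec (Pi.single (padBits 0 x 0) 1))
      ≤ r * ((Fintype.card (BitStr (n+1))) * (4/D)) := by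
    have := tel hεpos (fun i => ExtMat (S i) (U i)) (fun i => ExtMat (S i) (U' i))
      (fun i => ExtFacts.ext_unitary (S i) (hSinj i) (hU i))
      (fun i => ExtFacts.ext_unitary (S i) (hSinj i) (hU' i))
      (fun i a b => ExtFacts.ext_entry_close (S i) (hclose i) hεpos a b)
      (Pi.single (padBits 0 x 0) 1)
    rw [en_single] at this
    simpa [hM, hM', circMat] using this
  have hcard : (Fintype.card (BitStr (n+1)) : ℝ) = 2^(n+1) := by
    rw [show Fintype.card (BitStr (n+1)) = 2^(n+1) by simp]
    push_cast; ring
  have hnum : (r:ℝ) * ((Fintype.card (BitStr (n+1))) * (4/D)) ≤ 1/2 := by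
    rw [hcard]
    have hDval : (D:ℝ) = 2^(n+4)*(R+1) := by rw [hD]; push_cast; ring
    have hrR : (r:ℝ) ≤ R := by exact_mod_cast hr
    have h2n : (0:ℝ) < 2^(n+1) := by positivity
    rw [show (r:ℝ) * ((2:ℝ)^(n+1) * (4/(D:ℝ))) = ((r:ℝ) * 2^(n+1) * 4)/D by ring]
    rw [div_le_div_iff₀ hDpos (by norm_num : (0:ℝ) < 2)]
    rw [hDval]
    have hp : (2:ℝ)^(n+4) = 2^(n+1) * 8 := by
      rw [show n+4 = (n+1)+3 by omega, pow_add]; norm_num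
    rw [hp]
    nlinarith [hrR, h2n]
  linarith

end Sep

/-! ### Cells and rounding -/

abbrev Cell (D : ℕ) := ↥(Finset.Icc (-(D:ℤ)) (D:ℤ))

def clamp (D : ℕ) (z : ℤ) : Cell D :=
  ⟨max (-(D:ℤ)) (min (D:ℤ) z), by simp only [Finset.mem_Icc]; constructor <;> omega⟩

lemma clamp_eq_self {D : ℕ} {z : ℤ} (h1 : -(D:ℤ) ≤ z) (h2 : z ≤ D) :
    (clamp D z).1 = z := by
  simp [clamp]; omega

noncomputable def cellOf (D : ℕ) (z : ℂ) : Cell D × Cell D :=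
  (clamp D ⌊z.re * D⌋, clamp D ⌊z.im * D⌋)

lemma floor_in_range {D : ℕ} {t : ℝ} (ht : |t| ≤ 1) :
    -(D:ℤ) ≤ ⌊t * D⌋ ∧ ⌊t * D⌋ ≤ D := by
  have h1 : (-1:ℝ) ≤ t := by cases abs_le.mp ht; assumption
  have h2 : t ≤ 1 := (abs_le.mp ht).2
  have hD : (0:ℝ) ≤ D := by positivity
  constructor
  · rw [Int.le_floor]
    push_cast
    nlinarith
  · have : t * D ≤ (D:ℝ) := by nlinarith
    calc ⌊t * D⌋ ≤ ⌊(D:ℝ)⌋ := Int.floor_le_floor this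
    _ = D := by exact_mod_cast Int.floor_intCast (D:ℤ)

lemma floor_close {D : ℕ} (hD : 1 ≤ D) {s t : ℝ} (h : ⌊s * D⌋ = ⌊t * D⌋) :
    |s - t| ≤ 2 / D := by
  have hDpos : (0:ℝ) < D := by exact_mod_cast hD
  have h1 : s * D < ⌊s * D⌋ + 1 := Int.lt_floor_add_one _
  have h2 : (⌊s * D⌋ : ℝ) ≤ s * D := Int.floor_le _
  have h3 : t * D < ⌊t * D⌋ + 1 := Int.lt_floor_add_one _
  have h4 : (⌊t * D⌋ : ℝ) ≤ t * D := Int.floor_le _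
  rw [h] at h1 h2
  have hA : s - t ≤ 2 / D := by rw [le_div_iff₀ hDpos]; nlinarith
  have hB : t - s ≤ 2 / D := by rw [le_div_iff₀ hDpos]; nlinarith
  rw [abs_le]
  constructor <;> linarith

lemma cellOf_close {D : ℕ} (hD : 1 ≤ D) {z z' : ℂ} (hz : ‖z‖ ≤ 1) (hz' : ‖z'‖ ≤ 1)
    (h : cellOf D z = cellOf D z') : ‖z - z'‖ ≤ 4 / D := by
  have hre : |z.re| ≤ 1 := le_trans (Complex.abs_re_le_norm z) hz
  have hre' : |z'.re| ≤ 1 := le_trans (Complex.abs_re_le_norm z') hz'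
  have him : |z.im| ≤ 1 := le_trans (Complex.abs_im_le_norm z) hz
  have him' : |z'.im| ≤ 1 := le_trans (Complex.abs_im_le_norm z') hz'
  have hfr : ⌊z.re * D⌋ = ⌊z'.re * D⌋ := by
    have := congrArg (fun p => (p.1 : Cell D).1) h
    simp only [cellOf] at this
    rwa [clamp_eq_self (floor_in_range hre).1 (floor_in_range hre).2,
      clamp_eq_self (floor_in_range hre').1 (floor_in_range hre').2] at this
  have hfi : ⌊z.im * D⌋ = ⌊z'.im * D⌋ := by
    have := congrArg (fun p => (p.2 : Cell D).1) h
    simp only [cellOf] at this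
    rwa [clamp_eq_self (floor_in_range him).1 (floor_in_range him).2,
      clamp_eq_self (floor_in_range him').1 (floor_in_range him').2] at this
  have d1 : |z.re - z'.re| ≤ 2 / D := floor_close hD hfr
  have d2 : |z.im - z'.im| ≤ 2 / D := floor_close hD hfi
  calc ‖z - z'‖ ≤ |(z - z').re| + |(z - z').im| := Complex.norm_le_abs_re_add_abs_im _
  _ = |z.re - z'.re| + |z.im - z'.im| := by simp
  _ ≤ 2/D + 2/D := add_le_add d1 d2
  _ = 4/D := by ring

/-! ### Encoding circuits -/

def decIdx (k q : ℕ) (hk : k ≤ q) (a : Fin (2^q)) : BitStr k :=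
  finFunctionFinEquiv.symm ⟨a.1 % 2^k, Nat.mod_lt _ (by positivity)⟩

def encIdx {k q : ℕ} (hk : k ≤ q) (a : BitStr k) : Fin (2^q) :=
  ⟨(finFunctionFinEquiv a).1,
    lt_of_lt_of_le (finFunctionFinEquiv a).2 (Nat.pow_le_pow_right (by norm_num) hk)⟩

lemma decIdx_encIdx {k q : ℕ} (hk : k ≤ q) (a : BitStr k) :
    decIdx k q hk (encIdx hk a) = a := by
  have hmod : (finFunctionFinEquiv a).1 % 2^k = (finFunctionFinEquiv a).1 :=
    Nat.mod_eq_of_lt (finFunctionFinEquiv a).2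
  unfold decIdx encIdx
  simp_rw [hmod]
  exact Equiv.symm_apply_apply finFunctionFinEquiv a

def GateCode (n q D : ℕ) : Type :=
  Fin q × (Fin q → Fin (n+1)) × (Fin (2^q) → Fin (2^q) → Cell D × Cell D)

noncomputable instance (n q D : ℕ) : Fintype (GateCode n q D) := by
  unfold GateCode; infer_instance

def CodeT (n q R D : ℕ) : Type := Σ r : Fin (R+1), (Fin (r:ℕ) → GateCode n q D)

noncomputable instance (n q R D : ℕ) : Fintype (CodeT n q R D) := by
  unfold CodeT; infer_instance

noncomputable def mkCode {n q R D : ℕ} (r : ℕ) (hrR : r < R+1) (k : Fin r → ℕ)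
    (hk : ∀ i, 1 ≤ k i ∧ k i ≤ q) (S : ∀ i, Fin (k i) → Fin (n+1))
    (U : ∀ i, Matrix (BitStr (k i)) (BitStr (k i)) ℂ) : CodeT n q R D :=
  ⟨⟨r, hrR⟩, fun i => (⟨k i - 1, by have := hk i; omega⟩,
    fun j => if h : (j:ℕ) < k i then S i ⟨j, h⟩ else 0,
    fun a b => cellOf D (U i (decIdx (k i) q (hk i).2 a) (decIdx (k i) q (hk i).2 b)))⟩

lemma mkCode_inj {n q : ℕ} (R D : ℕ) (hD : D = 2^(n+4)*(R+1)) (hD1 : 1 ≤ D)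
    {r r' : ℕ} (hr : r < R+1) (hr' : r' < R+1)
    {k : Fin r → ℕ} {k' : Fin r' → ℕ}
    (hk : ∀ i, 1 ≤ k i ∧ k i ≤ q) (hk' : ∀ i, 1 ≤ k' i ∧ k' i ≤ q)
    {S : ∀ i, Fin (k i) → Fin (n+1)} {S' : ∀ i, Fin (k' i) → Fin (n+1)}
    (hS : ∀ i, Function.Injective (S i)) (hS' : ∀ i, Function.Injective (S' i))
    {U : ∀ i, Matrix (BitStr (k i)) (BitStr (k i)) ℂ}
    {U' : ∀ i, Matrix (BitStr (k' i)) (BitStr (k' i)) ℂ}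
    (hU : ∀ i, U i ∈ Matrix.unitaryGroup (BitStr (k i)) ℂ)
    (hU' : ∀ i, U' i ∈ Matrix.unitaryGroup (BitStr (k' i)) ℂ)
    {f f' : (Fin n → Fin 2) → Fin 2}
    (hf : MatComputesStringent (circMat S U) f)
    (hf' : MatComputesStringent (circMat S' U') f')
    (h : mkCode (R := R) (D := D) r hr k hk S U = mkCode (R := R) (D := D) r' hr' k' hk' S' U') :
    f = f' := by
  -- first components agree
  have hrr : r = r' := by
    have := congrArg (fun z => (z.1 : ℕ)) h
    simpa [mkCode] using this
  subst hrr
  -- second components agree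
  have h2 := (Sigma.mk.inj_iff.mp h).2
  have h2' : (fun i : Fin r => ((⟨k i - 1, by have := hk i; omega⟩ : Fin q),
      fun j : Fin q => if h : (j:ℕ) < k i then S i ⟨j, h⟩ else 0,
      fun a b => cellOf D (U i (decIdx (k i) q (hk i).2 a) (decIdx (k i) q (hk i).2 b))))
      = (fun i : Fin r => ((⟨k' i - 1, by have := hk' i; omega⟩ : Fin q),
      fun j : Fin q => if h : (j:ℕ) < k' i then S' i ⟨j, h⟩ else 0,
      fun a b => cellOf D (U' i (decIdx (k' i) q (hk' i).2 a) (decIdx (k' i) q (hk' i).2 b)))) :=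
    eq_of_heq h2
  -- arities agree
  have hkk : k = k' := by
    funext i
    have := congrArg (fun g => ((g i).1 : ℕ)) h2'
    simp only at this
    have h1 := hk i
    have h2 := hk' i
    omega
  subst hkk
  -- wire assignments agree
  have hSS : S = S' := by
    funext i j
    have := congrArg (fun g => (g i).2.1 ⟨(j:ℕ), lt_of_lt_of_le j.2 (hk i).2⟩) h2'
    simp only at this
    rw [dif_pos j.2, dif_pos j.2] at this
    simpa using this
  subst hSS
  -- gate entries are close
  have hclose : ∀ i a b, ‖U i a b - U' i a b‖ ≤ 4/D := by
    intro i a b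
    have hcell := congrArg
      (fun g => (g i).2.2 (encIdx (hk i).2 a) (encIdx (hk i).2 b)) h2'
    simp only at hcell
    rw [decIdx_encIdx, decIdx_encIdx] at hcell
    exact cellOf_close hD1 (unitary_entry_le (hU i) a b) (unitary_entry_le (hU' i) a b) hcell
  exact separation R D hD (Nat.lt_succ_iff.mp hr) S hS hU hU' hclose hf hf'

/-! ### Counting codes -/

lemma two_mul_le_two_pow {n : ℕ} (hn : 1 ≤ n) : 2*n ≤ 2^n := by
  induction n with
  | zero => omega
  | succ m ih =>
    rcases Nat.eq_or_lt_of_le hn with h | h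
    · simp [← h]
    · have hm : 1 ≤ m := by omega
      have := ih hm
      have h2 : 2 ≤ 2^m := by
        calc 2 = 2*1 := by ring
        _ ≤ 2*m := by omega
        _ ≤ 2^m := this
      rw [pow_succ]
      omega

lemma four_mul_le_two_pow' : ∀ m : ℕ, 4*(4+m) ≤ 2^(4+m) := by
  intro m
  induction m with
  | zero => norm_num
  | succ m ih =>
    have h4 : 4 ≤ 2^(4+m) := le_trans (by omega) ih
    rw [show 4+(m+1) = (4+m)+1 by omega, pow_succ]
    omega

lemma four_mul_le_two_pow {n : ℕ} (hn : 4 ≤ n) : 4*n ≤ 2^n := by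
  obtain ⟨m, rfl⟩ := Nat.exists_eq_add_of_le hn
  exact four_mul_le_two_pow' m

lemma card_cell (D : ℕ) : Fintype.card (Cell D) = 2*D+1 := by
  rw [Fintype.card_coe]
  have : ((D:ℤ) + 1 - (-(D:ℤ))) = ((2*D+1 : ℕ) : ℤ) := by push_cast; ring
  rw [Int.card_Icc, this, Int.toNat_natCast]

lemma card_code_le {q n : ℕ} (hq : 1 ≤ q) (hn : 1 ≤ n) (R D : ℕ)
    (hD : D = 2^(n+4)*(R+1))
    (key : R * n * 2^(2*q+7) ≤ 2^n) :
    Fintype.card (CodeT n q R D) ≤ 2^(2^(n-1)) := by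
  -- the cardinality of gate codes
  set G := Fintype.card (GateCode n q D) with hG
  have c1 : Fintype.card (Cell D × Cell D) = (2*D+1)^2 := by
    rw [Fintype.card_prod, card_cell]; ring
  have c2 : Fintype.card (Fin (2^q) → Fin (2^q) → Cell D × Cell D)
      = ((2*D+1)^2)^(2^q*2^q) := by
    rw [Fintype.card_fun, Fintype.card_fun, c1, Fintype.card_fin, ← pow_mul]
  have c3 : Fintype.card (Fin q → Fin (n+1)) = (n+1)^q := by
    rw [Fintype.card_fun, Fintype.card_fin, Fintype.card_fin]
  have hGformula : G = q * ((n+1)^q * ((2*D+1)^2)^(2^q*2^q)) := by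
    rw [hG]
    unfold GateCode
    rw [Fintype.card_prod, Fintype.card_prod, c2, c3, Fintype.card_fin]
  have hG1 : 1 ≤ G := by
    rw [hG]
    have : Nonempty (GateCode n q D) :=
      ⟨(⟨0, hq⟩, fun _ => 0, fun _ _ => (clamp D 0, clamp D 0))⟩
    exact Fintype.card_pos
  -- basic numeric facts
  have h2q : 512 ≤ 2^(2*q+7) := by
    calc (512:ℕ) = 2^9 := by norm_num
    _ ≤ 2^(2*q+7) := Nat.pow_le_pow_right (by norm_num) (by omega)
  have h2n : 2 ≤ 2^n := by
    calc (2:ℕ) = 2^1 := by norm_num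
    _ ≤ 2^n := Nat.pow_le_pow_right (by norm_num) hn
  have hR512 : R * 512 ≤ 2^n := by
    have hstep : 512 ≤ n * 2^(2*q+7) :=
      le_trans h2q (Nat.le_mul_of_pos_left _ (by omega))
    calc R * 512 ≤ R * (n * 2^(2*q+7)) := Nat.mul_le_mul_left R hstep
    _ = R * n * 2^(2*q+7) := by ring
    _ ≤ 2^n := key
  have hR1 : R + 1 ≤ 2^n := by omega
  have hDle : D ≤ 2^(2*n+4) := by
    rw [hD]
    calc 2^(n+4)*(R+1) ≤ 2^(n+4)*2^n := Nat.mul_le_mul_left _ hR1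
    _ = 2^(2*n+4) := by rw [← pow_add]; congr 1; omega
  have hCell : 2*D+1 ≤ 2^(2*n+6) := by
    have h1 : (2:ℕ)^(2*n+6) = 4 * 2^(2*n+4) := by
      rw [show 2*n+6 = (2*n+4)+2 by omega, pow_add]
      ring
    have h2 : 0 < (2:ℕ)^(2*n+4) := by positivity
    omega
  -- bound G by a power of two
  have hq2 : q ≤ 4^q := by
    calc q ≤ 2^q := (Nat.lt_two_pow_self (n := q)).le
    _ ≤ 4^q := Nat.pow_le_pow_left (by norm_num) q
  have hn1 : n + 1 ≤ 2^n := Nat.lt_two_pow_self (n := n)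
  have hGle : G ≤ 2^(q + n*q + (4*n+12)*4^q) := by
    rw [hGformula]
    have e1 : q ≤ 2^q := (Nat.lt_two_pow_self (n := q)).le
    have e2 : (n+1)^q ≤ (2^n)^q := Nat.pow_le_pow_left hn1 q
    have e3 : ((2*D+1)^2)^(2^q*2^q) ≤ ((2^(2*n+6))^2)^(4^q) := by
      rw [show (2:ℕ)^q * 2^q = 4^q by rw [← Nat.mul_pow]]
      exact Nat.pow_le_pow_left (Nat.pow_le_pow_left hCell 2) _
    calc q * ((n+1)^q * ((2*D+1)^2)^(2^q*2^q))
        ≤ 2^q * ((2^n)^q * ((2^(2*n+6))^2)^(4^q)) := by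
          apply Nat.mul_le_mul e1
          exact Nat.mul_le_mul e2 e3
    _ = 2^(q + n*q + (4*n+12)*4^q) := by
        rw [← pow_mul, ← pow_mul, ← pow_mul, ← pow_add, ← pow_add]
        congr 1
        ring
  have hexp : q + n*q + (4*n+12)*4^q ≤ 2^(2*q+5)*n := by
    have hE : (2:ℕ)^(2*q+5) = 32*4^q := by
      rw [pow_add, pow_mul]
      ring
    rw [hE]
    nlinarith [hq2, hn]
  have hGle2 : G ≤ 2^(2^(2*q+5)*n) :=
    le_trans hGle (Nat.pow_le_pow_right (by norm_num) hexp)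
  -- total count
  have hcard : Fintype.card (CodeT n q R D) = ∑ a : Fin (R+1), G^(a:ℕ) := by
    unfold CodeT
    rw [Fintype.card_sigma]
    refine Finset.sum_congr rfl fun a _ => ?_
    simp [Fintype.card_fun]
    rfl
  have hsum : Fintype.card (CodeT n q R D) ≤ (R+1) * G^R := by
    rw [hcard]
    calc ∑ a : Fin (R+1), G^(a:ℕ) ≤ ∑ _a : Fin (R+1), G^R := by
          refine Finset.sum_le_sum fun a _ => ?_
          exact Nat.pow_le_pow_right hG1 (by omega)
    _ = (R+1) * G^R := by
        rw [Finset.sum_const, Finset.card_univ, Fintype.card_fin, smul_eq_mul]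
  have hfinal : (R+1) * G^R ≤ 2^(2^(n-1)) := by
    have hstep : (R+1) * G^R ≤ 2^(n + 2^(2*q+5)*n*R) := by
      calc (R+1) * G^R ≤ 2^n * (2^(2^(2*q+5)*n))^R := by
            exact Nat.mul_le_mul hR1 (Nat.pow_le_pow_left hGle2 R)
      _ = 2^(n + 2^(2*q+5)*n*R) := by
          rw [← pow_mul, ← pow_add]
    refine le_trans hstep (Nat.pow_le_pow_right (by norm_num) ?_)
    -- n + 2^(2q+5)*n*R ≤ 2^(n-1)
    have h2pow : 2^(n-1)*2 = 2^n := by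
      rw [← pow_succ]
      congr 1
      omega
    rcases Nat.eq_zero_or_pos R with h | h
    · -- R = 0 : goal n ≤ 2^(n-1)
      subst h
      simp only [Nat.mul_zero, Nat.add_zero]
      have := two_mul_le_two_pow hn
      linarith [h2pow, this]
    · -- R ≥ 1 : n is large
      have hbig : 2^(2*q+7) ≤ 2^n := by
        calc 2^(2*q+7) ≤ R * n * 2^(2*q+7) := by
              have h1 : 1 ≤ R * n := Nat.one_le_iff_ne_zero.mpr (by positivity)
              calc 2^(2*q+7) = 1 * 2^(2*q+7) := by ring
              _ ≤ R * n * 2^(2*q+7) := Nat.mul_le_mul_right _ h1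
        _ ≤ 2^n := key
      have hnbig : 2*q+7 ≤ n := by
        exact (Nat.pow_le_pow_iff_right (by norm_num)).mp hbig
      have h4n : 4*n ≤ 2^n := four_mul_le_two_pow (by omega)
      have hEnR : 4 * (2^(2*q+5)*n*R) ≤ 2^n := by
        have hsplit : (2:ℕ)^(2*q+7) = 4 * 2^(2*q+5) := by
          rw [show 2*q+7 = (2*q+5)+2 by omega, pow_add]
          ring
        calc 4 * (2^(2*q+5)*n*R) = R*n*2^(2*q+7) := by rw [hsplit]; ring
        _ ≤ 2^n := key
      omega
  exact le_trans hsum hfinal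

/-! ### Main theorem -/

theorem quantum_shannon_lower_bound_stringent (q : ℕ) (hq : 1 ≤ q) :
    ∃ c : ℝ, 0 < c ∧ c < 1 ∧
      ∀ n : ℕ, 1 ≤ n →
        Nat.card {f : (Fin n → Fin 2) → Fin 2 |
            StringentlyComputedBySmallCircuit q n c f} ≤ 2 ^ 2 ^ (n - 1) := by
  refine ⟨((2:ℝ)^(2*q+7))⁻¹, by positivity, ?_, ?_⟩
  · rw [inv_lt_one_iff₀]
    right
    exact one_lt_pow₀ (by norm_num) (by omega)
  intro n hn
  set c : ℝ := ((2:ℝ)^(2*q+7))⁻¹ with hc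
  set R : ℕ := ⌊c * 2^n / n⌋₊ with hRdef
  set D : ℕ := 2^(n+4)*(R+1) with hDdef
  have hD1 : 1 ≤ D := by
    rw [hDdef]
    have : 0 < 2^(n+4)*(R+1) := by positivity
    omega
  have hnR : (0:ℝ) < n := by exact_mod_cast hn
  -- the key numeric inequality
  have key : R * n * 2^(2*q+7) ≤ 2^n := by
    have h1 : (R:ℝ) ≤ c * 2^n / n := Nat.floor_le (by positivity)
    have h2 : (R:ℝ) * n * 2^(2*q+7) ≤ 2^n := by
      have h3 : (R:ℝ) * n ≤ c * 2^n := by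
        calc (R:ℝ) * n ≤ (c * 2^n / n) * n := by
              exact mul_le_mul_of_nonneg_right h1 (le_of_lt hnR)
        _ = c * 2^n := by field_simp
      calc (R:ℝ) * n * 2^(2*q+7) ≤ (c * 2^n) * 2^(2*q+7) :=
            mul_le_mul_of_nonneg_right h3 (by positivity)
      _ = 2^n := by
          rw [hc]
          field_simp
    exact_mod_cast (by push_cast; exact h2 :
      ((R * n * 2^(2*q+7) : ℕ) : ℝ) ≤ ((2^n : ℕ) : ℝ))
  -- build an injection into codes
  set 𝒮 := {f : (Fin n → Fin 2) → Fin 2 | StringentlyComputedBySmallCircuit q n c f}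
    with h𝒮
  have hmem : ∀ fp : ↥𝒮, StringentlyComputedBySmallCircuit q n c fp.1 := fun fp => fp.2
  choose r k S U hrle hk hSinj hUun hstr using hmem
  have hrR : ∀ fp : ↥𝒮, r fp < R + 1 := by
    intro fp
    have := Nat.le_floor (α := ℝ) (hrle fp)
    omega
  have hinj : Function.Injective
      (fun fp : ↥𝒮 => mkCode (R := R) (D := D) (r fp) (hrR fp) (k fp) (hk fp)
        (S fp) (U fp)) := by
    intro fp fp' h
    apply Subtype.ext
    exact mkCode_inj R D hDdef hD1 (hrR fp) (hrR fp') (hk fp) (hk fp')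
      (hSinj fp) (hSinj fp') (hUun fp) (hUun fp') (hstr fp) (hstr fp') h
  calc Nat.card ↥𝒮 ≤ Nat.card (CodeT n q R D) :=
        Nat.card_le_card_of_injective _ hinj
  _ = Fintype.card (CodeT n q R D) := Nat.card_eq_fintype_card
  _ ≤ 2^(2^(n-1)) := card_code_le hq hn R D hDdef key
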